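/- arXiv:2509.15294 — 6 statements merged into one kernel-verified Lean document; each statement's English description precedes it below -/
import Mathlib

section
/- For any double-occurrence word x ∈ Γ_n, the red-first BPSP cost can be expressed via graph invariants: ξ_n(σ_RF(x)) = n - 1/2 + (1/2)·#dl(x) + (1/2)·W_tot(G_x). -/
/-- `x` is a double-occurrence word of length `2n` over the alphabet `Fin n`:
every symbol occurs exactly twice among positions `0, …, 2n-1`. -/
def DoubleOcc (n : ℕ) (x : ℕ → Fin n) : Prop :=
  ∀ t : Fin n, ((Finset.range (2*n)).filter (fun j => x j = t)).card = 2

/-- The eta function: `[xᵢ₊₁ ∈ {x₀,…,xᵢ}] XOR [xᵢ ∈ {x₀,…,xᵢ₋₁}]` (0-indexed). -/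
def eta (n : ℕ) (x : ℕ → Fin n) (i : ℕ) : ℕ :=
  (if x (i+1) ∈ (Finset.range (i+1)).image x then 1 else 0) ^^^
  (if x i ∈ (Finset.range i).image x then 1 else 0)

/-- The signed weight function `θ_x` on unordered pairs of symbols. -/
def theta {n : ℕ} (x : ℕ → Fin n) (e : Sym2 (Fin n)) : ℤ :=
  -∑ i ∈ Finset.range (2*n - 1),
      (-1 : ℤ)^(eta n x i) * (if e = s(x i, x (i+1)) then 1 else 0)

/-- The edge set of the BPSP graph `G_x`: pairs of distinct consecutive symbols with
nonzero weight. -/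
def edgesB {n : ℕ} (x : ℕ → Fin n) : Finset (Sym2 (Fin n)) :=
  ((Finset.range (2*n - 1)).image (fun i => s(x i, x (i+1)))).filter
    (fun e => ¬ e.IsDiag ∧ theta x e ≠ 0)

/-- BPSP cost: number of adjacent colour changes among positions `0, …, 2n-1`. -/
def xiCost (n : ℕ) (f : ℕ → Bool) : ℕ :=
  ∑ i ∈ Finset.range (2*n - 1), if f i = f (i+1) then 0 else 1

/-- Red-first colouring: first occurrence red (`true`), second blue (`false`). -/
def redFirst {n : ℕ} (x : ℕ → Fin n) (i : ℕ) : Bool :=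
  if x i ∈ (Finset.range i).image x then false else true

theorem redFirst_cost_graph {n : ℕ} (x : ℕ → Fin n) (hx : DoubleOcc n x) :
    (xiCost n (redFirst x) : ℚ)
      = n - 1/2
        + (((Finset.range (2*n - 1)).filter (fun i => x i = x (i+1))).card : ℚ) / 2
        + ((∑ e ∈ edgesB x, theta x e : ℤ) : ℚ) / 2 := by
  have hn : 0 < n := (x 0).pos
  -- diagonal positions have eta = 1
  have hdiag : ∀ i ∈ Finset.range (2*n - 1), x i = x (i+1) → eta n x i = 1 := by
    intro i hi hxi
    simp only [Finset.mem_range] at hi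
    have hb : x i ∉ (Finset.range i).image x := by
      intro hmem
      obtain ⟨j, hj, hjx⟩ := Finset.mem_image.mp hmem
      simp only [Finset.mem_range] at hj
      have hcard := hx (x i)
      have hsub : ({j, i, i+1} : Finset ℕ) ⊆ (Finset.range (2*n)).filter (fun k => x k = x i) := by
        intro k hk
        simp only [Finset.mem_insert, Finset.mem_singleton] at hk
        simp only [Finset.mem_filter, Finset.mem_range]
        rcases hk with rfl | rfl | rfl
        · exact ⟨by omega, hjx⟩
        · exact ⟨by omega, rfl⟩
        · exact ⟨by omega, hxi.symm⟩
      have h3 : ({j, i, i+1} : Finset ℕ).card = 3 := by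
        rw [Finset.card_insert_of_notMem (by simp; omega),
            Finset.card_insert_of_notMem (by simp)]
        rfl
      have := Finset.card_le_card hsub
      omega
    have ha : x (i+1) ∈ (Finset.range (i+1)).image x := by
      exact Finset.mem_image.mpr ⟨i, Finset.mem_range.mpr (Nat.lt_succ_self i), hxi⟩
    simp [eta, ha, hb]
  -- pointwise cost identity
  have hpt : ∀ i, (if redFirst x i = redFirst x (i+1) then (0:ℚ) else 1)
      = (1 - (-1:ℚ)^(eta n x i))/2 := by
    intro i
    by_cases h1 : x (i+1) ∈ (Finset.range (i+1)).image x <;>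
    by_cases h2 : x i ∈ (Finset.range i).image x <;>
      simp [redFirst, eta, h1, h2] <;> norm_num
  -- edge sum identity
  have hedge : (∑ e ∈ edgesB x, theta x e)
      = -∑ i ∈ (Finset.range (2*n-1)).filter (fun i => ¬ x i = x (i+1)),
          (-1:ℤ)^(eta n x i) := by
    have hE : ∑ e ∈ edgesB x, theta x e
        = ∑ e ∈ ((Finset.range (2*n-1)).image (fun i => s(x i, x (i+1)))).filter
            (fun e => ¬ e.IsDiag), theta x e := by
      apply Finset.sum_subset
      · intro e he
        simp only [edgesB, Finset.mem_filter] at he ⊢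
        exact ⟨he.1, he.2.1⟩
      · intro e he hne
        simp only [edgesB, Finset.mem_filter] at he hne
        by_contra h
        exact hne ⟨he.1, he.2, h⟩
    rw [hE]; clear hE
    simp only [theta, Finset.sum_neg_distrib, neg_inj]
    rw [Finset.sum_comm]
    rw [Finset.sum_filter]
    apply Finset.sum_congr rfl
    intro i hi
    rw [← Finset.mul_sum, Finset.sum_ite_eq']
    simp only [Finset.mem_range] at hi
    by_cases hd : x i = x (i+1)
    · have : (s(x i, x (i+1)) : Sym2 (Fin n)).IsDiag := by
        rw [Sym2.mk_isDiag_iff]; exact hd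
      simp [Finset.mem_filter, this, hd]
    · have hmem : s(x i, x (i+1)) ∈ Finset.filter (fun e => ¬e.IsDiag)
          (Finset.image (fun i => s(x i, x (i + 1))) (Finset.range (2 * n - 1))) := by
        rw [Finset.mem_filter]
        refine ⟨Finset.mem_image.mpr ⟨i, Finset.mem_range.mpr hi, rfl⟩, ?_⟩
        rw [Sym2.mk_isDiag_iff]; exact hd
      simp [hmem, hd]
  -- assemble
  have hcast : (xiCost n (redFirst x) : ℚ)
      = ∑ i ∈ Finset.range (2*n-1), (if redFirst x i = redFirst x (i+1) then (0:ℚ) else 1) := by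
    unfold xiCost
    push_cast
    exact Finset.sum_congr rfl (fun i _ => by split <;> simp)
  set D := (Finset.range (2*n-1)).filter (fun i => x i = x (i+1)) with hDdef
  set N := (Finset.range (2*n-1)).filter (fun i => ¬ x i = x (i+1)) with hNdef
  have hsplit : D.card + N.card = 2*n - 1 := by
    rw [hDdef, hNdef, Finset.card_filter_add_card_filter_not, Finset.card_range]
  have hedgeQ : ((∑ e ∈ edgesB x, theta x e : ℤ) : ℚ)
      = -∑ i ∈ N, (-1:ℚ)^(eta n x i) := by
    rw [hedge]; push_cast; ring
  have hD : ∑ i ∈ D, (if redFirst x i = redFirst x (i+1) then (0:ℚ) else 1) = D.card := by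
    calc ∑ i ∈ D, (if redFirst x i = redFirst x (i+1) then (0:ℚ) else 1)
        = ∑ _i ∈ D, (1:ℚ) := Finset.sum_congr rfl (fun i hi => by
          rw [hpt, hdiag i (Finset.mem_filter.mp hi).1 (Finset.mem_filter.mp hi).2]; norm_num)
      _ = D.card := by simp
  have hNsum : ∑ i ∈ N, (if redFirst x i = redFirst x (i+1) then (0:ℚ) else 1)
      = (N.card : ℚ)/2 - (∑ i ∈ N, (-1:ℚ)^(eta n x i))/2 := by
    calc ∑ i ∈ N, (if redFirst x i = redFirst x (i+1) then (0:ℚ) else 1)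
        = ∑ i ∈ N, (1 - (-1:ℚ)^(eta n x i))/2 := Finset.sum_congr rfl (fun i _ => hpt i)
      _ = (∑ i ∈ N, (1 - (-1:ℚ)^(eta n x i)))/2 := by rw [Finset.sum_div]
      _ = ((N.card : ℚ) - ∑ i ∈ N, (-1:ℚ)^(eta n x i))/2 := by
          rw [Finset.sum_sub_distrib]; simp
      _ = (N.card : ℚ)/2 - (∑ i ∈ N, (-1:ℚ)^(eta n x i))/2 := by ring
  rw [hcast, ← Finset.sum_filter_add_sum_filter_not (Finset.range (2*n-1))
      (fun i => x i = x (i+1)), ← hDdef, ← hNdef, hD, hNsum, hedgeQ]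
  have hc : (D.card : ℚ) + (N.card : ℚ) = 2*n - 1 := by
    have h2 : (D.card + N.card) + 1 = 2*n := by omega
    have := congrArg (fun k : ℕ => (k : ℚ)) h2
    push_cast at this
    linarith
  linarith
end

section
/- For any double-occurrence word x ∈ Γ_n and any ICC colouring z ∈ {r,b}^n, the number of paint swaps equals the red-first cost minus the cut weight: ξ_n(E_n(x,z)) = ξ_n(σ_RF(x)) - wt_{G_x}(z). -/
/-- The ICC expansion map. Colours: `true` = r, `false` = b. -/
def expandB {n : ℕ} (x : ℕ → Fin n) (z : Fin n → Bool) (i : ℕ) : Bool :=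
  if x i ∈ (Finset.range i).image x then !(z (x i)) else z (x i)

/-- Weight of the cut `z` in the BPSP graph `G_x`. -/
def cutW {n : ℕ} (x : ℕ → Fin n) (z : Fin n → Bool) : ℤ :=
  -∑ k ∈ Finset.range (2*n - 1),
      (-1 : ℤ)^(eta n x k) * (if z (x k) = z (x (k+1)) then 0 else 1)

theorem icc_cost_eq_redFirst_sub_cut {n : ℕ} (x : ℕ → Fin n) (hx : DoubleOcc n x)
    (z : Fin n → Bool) :
    (xiCost n (expandB x z) : ℤ) = (xiCost n (redFirst x) : ℤ) - cutW x z := by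
  unfold xiCost cutW
  push_cast
  rw [sub_neg_eq_add, ← Finset.sum_add_distrib]
  refine Finset.sum_congr rfl fun k _ => ?_
  unfold expandB redFirst eta
  by_cases a : x k ∈ (Finset.range k).image x <;>
    by_cases b : x (k+1) ∈ (Finset.range (k+1)).image x <;>
    simp only [a, b, if_true, if_false, if_pos, if_neg] <;>
    cases z (x k) <;> cases z (x (k+1)) <;> norm_num
end

section
/- For any double-occurrence word x ∈ Γ_n and ICC colouring z ∈ {r,b}^n, ξ_n(E_n(x,z)) = n - 1/2 + (1/2)·#dl(x) + (1/2)·W_tot(G_x) - wt_{G_x}(z), where #dl(x) is the number of indices i with x_i = x_{i+1} and W_tot(G_x) is the total weight of the BPSP graph. -/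
/-- The number of double letters of `x`. -/
def dlCount (n : ℕ) (x : ℕ → Fin n) : ℕ :=
  ((Finset.range (2*n - 1)).filter (fun i => x i = x (i+1))).card

/-- Total weight of the BPSP graph `G_x`. -/
def wTot {n : ℕ} (x : ℕ → Fin n) : ℤ :=
  -(dlCount n x : ℤ) - ∑ k ∈ Finset.range (2*n - 1), (-1 : ℤ)^(eta n x k)

theorem icc_cost_graph {n : ℕ} (x : ℕ → Fin n) (hx : DoubleOcc n x) (z : Fin n → Bool) :
    (xiCost n (expandB x z) : ℚ)
      = n - 1/2 + (dlCount n x : ℚ)/2 + (wTot x : ℚ)/2 - (cutW x z : ℚ) := by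
  rcases Nat.eq_zero_or_pos n with rfl | hn
  · exact (x 0).elim0
  have key : ∀ k ∈ Finset.range (2*n-1),
      (((if expandB x z k = expandB x z (k+1) then 0 else 1 : ℕ) : ℚ))
      = 1/2 - (1/2) * (-1:ℚ)^(eta n x k)
        + (-1:ℚ)^(eta n x k) * (if z (x k) = z (x (k+1)) then 0 else 1) := by
    intro k _
    simp only [expandB, eta]
    by_cases h1 : x k ∈ (Finset.range k).image x <;>
    by_cases h2 : x (k+1) ∈ (Finset.range (k+1)).image x <;>
      simp only [h1, h2, if_true, if_false] <;>
      cases hzk : z (x k) <;> cases hzk1 : z (x (k+1)) <;>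
      simp [hzk, hzk1] <;> norm_num
  have hsum : (xiCost n (expandB x z) : ℚ)
      = ∑ k ∈ Finset.range (2*n-1), (1/2 - (1/2)*(-1:ℚ)^(eta n x k)
        + (-1:ℚ)^(eta n x k) * (if z (x k) = z (x (k+1)) then 0 else 1)) := by
    rw [xiCost, Nat.cast_sum]
    exact Finset.sum_congr rfl key
  rw [hsum, Finset.sum_add_distrib, Finset.sum_sub_distrib, Finset.sum_const,
    ← Finset.mul_sum, Finset.card_range]
  unfold wTot cutW
  rw [nsmul_eq_mul, show ((2*n-1:ℕ):ℚ) = 2*(n:ℚ)-1 by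
    push_cast [Nat.cast_sub (by omega : 1 ≤ 2*n)]; ring]
  push_cast [apply_ite (Int.cast : ℤ → ℚ)]
  ring
end

section
/- For any double-occurrence word x ∈ Γ_n, the optimal BPSP cost equals the red-first cost minus the maximum cut weight: min_{f ∈ Ξ_n(x)} ξ_n(f) = ξ_n(σ_RF(x)) - max_{z ∈ {r,b}^n} wt_{G_x}(z). -/
/-- A valid BPSP colouring: the two occurrences of each symbol get opposite colours. -/
def ValidC {n : ℕ} (x : ℕ → Fin n) (f : ℕ → Bool) : Prop :=
  ∀ i j, i < 2*n → j < 2*n → i ≠ j → x i = x j → f i ≠ f j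

/-- The colouring associated to a cut `z`. -/
def Ez {n : ℕ} (x : ℕ → Fin n) (z : Fin n → Bool) (i : ℕ) : Bool :=
  if x i ∈ (Finset.range i).image x then !(z (x i)) else z (x i)

lemma xiCost_Ez {n : ℕ} (x : ℕ → Fin n) (z : Fin n → Bool) :
    (xiCost n (Ez x z) : ℤ) = (xiCost n (redFirst x) : ℤ) - cutW x z := by
  unfold xiCost cutW
  rw [sub_neg_eq_add, Nat.cast_sum, Nat.cast_sum, ← Finset.sum_add_distrib]
  refine Finset.sum_congr rfl (fun k _ => ?_)
  unfold Ez redFirst eta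
  by_cases hP : x (k+1) ∈ (Finset.range (k+1)).image x <;>
    by_cases hQ : x k ∈ (Finset.range k).image x <;>
      simp only [hP, hQ, if_true, if_false] <;>
        cases hab : z (x k) <;> cases hcd : z (x (k+1)) <;> norm_num

lemma valid_Ez {n : ℕ} (x : ℕ → Fin n) (hx : DoubleOcc n x) (z : Fin n → Bool) :
    ValidC x (Ez x z) := by
  -- first: no symbol occurs three times
  have key : ∀ i j, i < j → j < 2*n → x i = x j →
      x i ∉ (Finset.range i).image x := by
    intro i j hij hj hxij hmem
    obtain ⟨k, hk, hxk⟩ := Finset.mem_image.mp hmem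
    rw [Finset.mem_range] at hk
    have h3 : ({k, i, j} : Finset ℕ) ⊆ (Finset.range (2*n)).filter (fun m => x m = x i) := by
      intro m hm
      simp only [Finset.mem_insert, Finset.mem_singleton] at hm
      rcases hm with rfl | rfl | rfl <;>
        simp [Finset.mem_filter, Finset.mem_range, hxk, hxij.symm] <;> omega
    have hcard : ({k, i, j} : Finset ℕ).card = 3 := by
      rw [Finset.card_insert_of_notMem, Finset.card_insert_of_notMem] <;>
        simp <;> omega
    have := Finset.card_le_card h3
    rw [hcard, hx (x i)] at this
    omega
  intro i j hi hj hij hxij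
  rcases lt_or_gt_of_ne hij with h | h
  · have h1 : x i ∉ (Finset.range i).image x := key i j h hj hxij
    have h2 : x j ∈ (Finset.range j).image x :=
      Finset.mem_image.mpr ⟨i, Finset.mem_range.mpr h, hxij⟩
    rw [Ez, Ez, if_neg h1, if_pos h2, hxij]
    cases z (x j) <;> simp
  · have h1 : x j ∉ (Finset.range j).image x := key j i h hi hxij.symm
    have h2 : x i ∈ (Finset.range i).image x :=
      Finset.mem_image.mpr ⟨j, Finset.mem_range.mpr h, hxij.symm⟩
    rw [Ez, Ez, if_pos h2, if_neg h1, hxij]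
    cases z (x j) <;> simp

lemma exists_Ez {n : ℕ} (x : ℕ → Fin n) (hx : DoubleOcc n x) (f : ℕ → Bool)
    (hf : ValidC x f) : ∃ z : Fin n → Bool, ∀ i < 2*n, f i = Ez x z i := by
  have hne : ∀ t : Fin n, ((Finset.range (2*n)).filter (fun j => x j = t)).Nonempty := by
    intro t
    rw [← Finset.card_pos, hx t]; norm_num
  set fo : Fin n → ℕ := fun t => ((Finset.range (2*n)).filter (fun j => x j = t)).min' (hne t)
    with hfo
  have hfomem : ∀ t, fo t ∈ (Finset.range (2*n)).filter (fun j => x j = t) :=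
    fun t => Finset.min'_mem _ _
  refine ⟨fun t => f (fo t), fun i hi => ?_⟩
  unfold Ez
  by_cases hs : x i ∈ (Finset.range i).image x
  · simp only [hs, if_true]
    obtain ⟨k, hk, hxk⟩ := Finset.mem_image.mp hs
    rw [Finset.mem_range] at hk
    have hmem := hfomem (x i)
    rw [Finset.mem_filter, Finset.mem_range] at hmem
    have hle : fo (x i) ≤ k := Finset.min'_le _ _ (by
      rw [Finset.mem_filter, Finset.mem_range]; exact ⟨by omega, hxk⟩)
    have hne' : fo (x i) ≠ i := by omega
    have := hf (fo (x i)) i hmem.1 hi hne' hmem.2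
    revert this
    cases f (fo (x i)) <;> cases f i <;> simp
  · simp only [hs, if_false]
    have hii : i ∈ (Finset.range (2*n)).filter (fun j => x j = x i) := by
      rw [Finset.mem_filter, Finset.mem_range]; exact ⟨hi, rfl⟩
    have hle : fo (x i) ≤ i := Finset.min'_le _ _ hii
    have hmem := hfomem (x i)
    rw [Finset.mem_filter] at hmem
    have : fo (x i) = i := by
      rcases eq_or_lt_of_le hle with h | h
      · exact h
      · exact absurd (Finset.mem_image.mpr ⟨fo (x i), Finset.mem_range.mpr h, hmem.2⟩) hs
    rw [this]

lemma xiCost_congr {n : ℕ} (f g : ℕ → Bool) (h : ∀ i < 2*n, f i = g i) :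
    xiCost n f = xiCost n g := by
  unfold xiCost
  refine Finset.sum_congr rfl (fun i hi => ?_)
  rw [Finset.mem_range] at hi
  rw [h i (by omega), h (i+1) (by omega)]

theorem bpsp_eq_redFirst_sub_maxcut {n : ℕ} (x : ℕ → Fin n) (hx : DoubleOcc n x) :
    ((sInf {m : ℕ | ∃ f : ℕ → Bool, ValidC x f ∧ xiCost n f = m} : ℕ) : ℤ)
      = (xiCost n (redFirst x) : ℤ)
        - Finset.univ.sup' Finset.univ_nonempty (fun z : Fin n → Bool => cutW x z) := by
  obtain ⟨z₀, -, hz₀⟩ := Finset.exists_mem_eq_sup' (Finset.univ_nonempty)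
    (fun z : Fin n → Bool => cutW x z)
  rw [hz₀, ← xiCost_Ez]
  congr 1
  have hmem : xiCost n (Ez x z₀) ∈
      {m : ℕ | ∃ f : ℕ → Bool, ValidC x f ∧ xiCost n f = m} :=
    ⟨Ez x z₀, valid_Ez x hx z₀, rfl⟩
  refine le_antisymm (Nat.sInf_le hmem) (le_csInf ⟨_, hmem⟩ ?_)
  rintro m ⟨f, hfv, rfl⟩
  obtain ⟨z, hz⟩ := exists_Ez x hx f hfv
  rw [xiCost_congr f (Ez x z) hz]
  have h1 : cutW x z ≤ cutW x z₀ := by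
    rw [← hz₀]; exact Finset.le_sup' _ (Finset.mem_univ z)
  have h2 : (xiCost n (Ez x z₀) : ℤ) ≤ (xiCost n (Ez x z) : ℤ) := by
    rw [xiCost_Ez, xiCost_Ez]; omega
  exact_mod_cast h2
end

section
/- For any double-occurrence word x ∈ Γ_n and spin assignment z ∈ {-1,1}^n, the number of paint swaps admits the Ising form ξ_n(E_n(x,z)) = n - 1/2 - (1/2)·Σ_{i=1}^{2n-1} (-1)^{η(x,i)} z_{x_i} z_{x_{i+1}}. -/
/-- The ICC expansion map for spin colourings (`1 ≡ r`, `-1 ≡ b`, `¬` is negation). -/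
def expandZ {n : ℕ} (x : ℕ → Fin n) (z : Fin n → ℤ) (i : ℕ) : ℤ :=
  if x i ∈ (Finset.range i).image x then -(z (x i)) else z (x i)

/-- BPSP cost for spin-valued colourings: number of adjacent colour changes. -/
def xiCostZ (n : ℕ) (f : ℕ → ℤ) : ℕ :=
  ∑ i ∈ Finset.range (2*n - 1), if f i = f (i+1) then 0 else 1

theorem ising_cost {n : ℕ} (x : ℕ → Fin n) (hx : DoubleOcc n x)
    (z : Fin n → ℤ) (hz : ∀ t, z t = 1 ∨ z t = -1) :
    (xiCostZ n (expandZ x z) : ℚ)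
      = n - 1/2 - (1/2) * ∑ i ∈ Finset.range (2*n - 1),
          (-1 : ℚ)^(eta n x i) * (z (x i) : ℚ) * (z (x (i+1)) : ℚ) := by
  rcases Nat.eq_zero_or_pos n with h | h
  · subst h; exact (x 0).elim0
  have key : ∀ i ∈ Finset.range (2*n-1),
      ((if expandZ x z i = expandZ x z (i+1) then (0:ℚ) else 1))
        = 1/2 - 1/2 * ((-1:ℚ)^(eta n x i) * (z (x i) : ℚ) * (z (x (i+1)) : ℚ)) := by
    intro i _
    unfold expandZ eta
    rcases hz (x i) with h1 | h1 <;> rcases hz (x (i+1)) with h2 | h2 <;>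
      split_ifs <;> simp_all <;> norm_num
  unfold xiCostZ
  push_cast
  rw [Finset.sum_congr rfl key, Finset.sum_sub_distrib, Finset.sum_const,
    Finset.card_range, ← Finset.mul_sum, nsmul_eq_mul, Nat.cast_sub (by omega : 1 ≤ 2*n)]
  push_cast; ring
end

section
/- For any double-occurrence word x ∈ Γ_n and spin assignment z ∈ {-1,1}^n, ξ_n(E_n(x,z)) = n - 1/2 + (1/2)·#dl(x) - (1/2)·Σ_{i: x_i ≠ x_{i+1}} (-1)^{η(x,i)} z_{x_i} z_{x_{i+1}}, where the sum ranges over i ∈ [2n-1] with x_i ≠ x_{i+1} and #dl(x) = |{i ∈ [2n-1] : x_i = x_{i+1}}|. -/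
lemma notmem_of_eq {n : ℕ} (x : ℕ → Fin n) (hx : DoubleOcc n x) (i : ℕ)
    (hi : i + 1 < 2*n) (h : x i = x (i+1)) : x i ∉ (Finset.range i).image x := by
  intro hmem
  obtain ⟨j, hj, hxj⟩ := Finset.mem_image.mp hmem
  have hjlt := Finset.mem_range.mp hj
  have hsub : ({j, i, i+1} : Finset ℕ) ⊆ (Finset.range (2*n)).filter (fun k => x k = x i) := by
    intro k hk
    simp only [Finset.mem_insert, Finset.mem_singleton] at hk
    simp only [Finset.mem_filter, Finset.mem_range]
    rcases hk with rfl | rfl | rfl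
    · exact ⟨by omega, hxj⟩
    · exact ⟨by omega, rfl⟩
    · exact ⟨by omega, h.symm⟩
  have hcard : ({j, i, i+1} : Finset ℕ).card = 3 := by
    rw [Finset.card_insert_of_notMem (by
        simp only [Finset.mem_insert, Finset.mem_singleton]; omega),
      Finset.card_insert_of_notMem (by simp only [Finset.mem_singleton]; omega),
      Finset.card_singleton]
  have := Finset.card_le_card hsub
  rw [hcard, hx (x i)] at this
  omega

lemma term_ne {n : ℕ} (x : ℕ → Fin n) (z : Fin n → ℤ) (hz : ∀ t, z t = 1 ∨ z t = -1)
    (i : ℕ) :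
    (if expandZ x z i = expandZ x z (i+1) then (0:ℚ) else 1)
      = 1/2 - (1/2) * ((-1:ℚ)^(eta n x i) * (z (x i) : ℚ) * (z (x (i+1)) : ℚ)) := by
  rcases hz (x i) with h1 | h1 <;> rcases hz (x (i+1)) with h2 | h2 <;>
    by_cases hb : x (i+1) ∈ (Finset.range (i+1)).image x <;>
    by_cases ha : x i ∈ (Finset.range i).image x <;>
    simp [expandZ, eta, ha, hb, h1, h2] <;> norm_num

theorem ising_cost_dl {n : ℕ} (x : ℕ → Fin n) (hx : DoubleOcc n x)
    (z : Fin n → ℤ) (hz : ∀ t, z t = 1 ∨ z t = -1) :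
    (xiCostZ n (expandZ x z) : ℚ)
      = n - 1/2
        + (((Finset.range (2*n - 1)).filter (fun i => x i = x (i+1))).card : ℚ) / 2
        - (1/2) * ∑ i ∈ (Finset.range (2*n - 1)).filter (fun i => x i ≠ x (i+1)),
            (-1 : ℚ)^(eta n x i) * (z (x i) : ℚ) * (z (x (i+1)) : ℚ) := by
  have hn : 1 ≤ n := by
    by_contra h
    interval_cases n
    exact (x 0).elim0
  have cast1 : (xiCostZ n (expandZ x z) : ℚ)
      = ∑ i ∈ Finset.range (2*n-1),
          (if expandZ x z i = expandZ x z (i+1) then (0:ℚ) else 1) := by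
    unfold xiCostZ
    push_cast [apply_ite (Nat.cast : ℕ → ℚ)]
    rfl
  rw [cast1,
    ← Finset.sum_filter_add_sum_filter_not (Finset.range (2*n-1)) (fun i => x i = x (i+1))]
  have heq : ∑ i ∈ (Finset.range (2*n-1)).filter (fun i => x i = x (i+1)),
      (if expandZ x z i = expandZ x z (i+1) then (0:ℚ) else 1)
      = (((Finset.range (2*n - 1)).filter (fun i => x i = x (i+1))).card : ℚ) := by
    rw [Finset.sum_congr rfl (fun i hi => ?_), Finset.sum_const, nsmul_eq_mul, mul_one]
    obtain ⟨hir, hxi⟩ := Finset.mem_filter.mp hi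
    have hlt := Finset.mem_range.mp hir
    have ha : x i ∉ (Finset.range i).image x := notmem_of_eq x hx i (by omega) hxi
    have hb : x (i+1) ∈ (Finset.range (i+1)).image x :=
      Finset.mem_image.mpr ⟨i, Finset.mem_range.mpr (Nat.lt_succ_self i), hxi⟩
    have e1 : expandZ x z i = z (x i) := if_neg ha
    have e2 : expandZ x z (i+1) = -(z (x (i+1))) := if_pos hb
    rw [e1, e2, ← hxi]
    rcases hz (x i) with h1 | h1 <;> rw [h1] <;> norm_num
  have hne : ∑ i ∈ (Finset.range (2*n-1)).filter (fun i => ¬ x i = x (i+1)),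
      (if expandZ x z i = expandZ x z (i+1) then (0:ℚ) else 1)
      = (((Finset.range (2*n-1)).filter (fun i => ¬ x i = x (i+1))).card : ℚ) / 2
        - (1/2) * ∑ i ∈ (Finset.range (2*n-1)).filter (fun i => ¬ x i = x (i+1)),
            (-1 : ℚ)^(eta n x i) * (z (x i) : ℚ) * (z (x (i+1)) : ℚ) := by
    rw [Finset.sum_congr rfl (fun i _ => term_ne x z hz i), Finset.sum_sub_distrib,
      Finset.sum_const, ← Finset.mul_sum, nsmul_eq_mul]
    ring
  rw [heq, hne]
  have hcard : ((Finset.range (2*n-1)).filter (fun i => x i = x (i+1))).card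
      + ((Finset.range (2*n-1)).filter (fun i => ¬ x i = x (i+1))).card = 2*n - 1 := by
    rw [Finset.card_filter_add_card_filter_not, Finset.card_range]
  have hcardQ : (((Finset.range (2*n-1)).filter (fun i => x i = x (i+1))).card : ℚ)
      + (((Finset.range (2*n-1)).filter (fun i => ¬ x i = x (i+1))).card : ℚ)
      = 2*n - 1 := by
    have h2 : (2*n - 1 : ℕ) + 1 = 2*n := by omega
    have := congrArg (Nat.cast : ℕ → ℚ) (hcard.trans rfl)
    push_cast at this ⊢
    have h3 : ((2*n - 1 : ℕ) : ℚ) = 2*n - 1 := by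
      push_cast [Nat.cast_sub (by omega : 1 ≤ 2*n)]; ring
    rw [h3] at this
    linarith
  simp only [ne_eq]
  linarith
end
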